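/- Let T be a tree on n vertices with domination number 2. Then ξ^{ee}(T) ≤ (5n−4)/6, with equality if and only if T is isomorphic to a double star P_2(a,b) for some integers a, b ≥ 1 with a + b = n − 2. -/

import Mathlib

open SimpleGraph

variable {V : Type*}

noncomputable def ecc (G : SimpleGraph V) (v : V) : ℕ := ⨆ u : V, G.dist v u

noncomputable def deg (G : SimpleGraph V) (v : V) : ℕ := (G.neighborSet v).ncard

noncomputable def ree {V : Type*} [Fintype V] (G : SimpleGraph V) : ℝ :=
  letI := Classical.decEq V
  letI := Classical.decRel G.Adj
  ∑ e ∈ G.edgeFinset,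
    Sym2.lift ⟨fun u v => 1 / (ecc G u : ℝ) + 1 / (ecc G v : ℝ), fun _ _ => by ring⟩ e

noncomputable def gdiam (G : SimpleGraph V) : ℕ := ⨆ v : V, ecc G v

/-- The domination number of a graph: the minimum size of a dominating set. -/
noncomputable def domNum {W : Type*} (G : SimpleGraph W) : ℕ :=
  sInf {m | ∃ D : Set W, (∀ x : W, x ∈ D ∨ ∃ y ∈ D, G.Adj x y) ∧ D.ncard = m}

/-- The double star `P_2(a,b)`: an edge `uv` (vertices 0 and 1) with `a` pendant
vertices attached to `u` (vertices 2, …, a+1) and `b` pendant vertices attached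
to `v` (vertices a+2, …, a+b+1). -/
def doubleStar (a b : ℕ) : SimpleGraph (Fin (a + b + 2)) :=
  SimpleGraph.fromRel (fun x y => (x.val = 0 ∧ y.val = 1) ∨
    (x.val = 0 ∧ 2 ≤ y.val ∧ y.val < a + 2) ∨ (x.val = 1 ∧ a + 2 ≤ y.val))


section Basics

variable {n : ℕ} {T : SimpleGraph (Fin n)}

lemma ecc_le' [Fintype V] [Nonempty V] {G : SimpleGraph V} {v : V} {k : ℕ}
    (h : ∀ u, G.dist v u ≤ k) : ecc G v ≤ k := ciSup_le h

lemma dist_le_ecc [Fintype V] {G : SimpleGraph V} {v : V} (u : V) :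
    G.dist v u ≤ ecc G v := le_ciSup (Set.Finite.bddAbove (Set.finite_range _)) u

lemma npos (hd : domNum T = 2) : 0 < n := by
  by_contra h
  push_neg at h
  interval_cases n
  have h0 : (0 : ℕ) ∈ {m | ∃ D : Set (Fin 0), (∀ x : Fin 0, x ∈ D ∨ ∃ y ∈ D, T.Adj x y) ∧
      D.ncard = m} := ⟨∅, fun x => x.elim0, by simp⟩
  have := Nat.sInf_le h0
  rw [domNum] at hd
  omega

lemma no_single_dom (hd : domNum T = 2) (v : Fin n) : ¬ (∀ x, x = v ∨ T.Adj x v) := by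
  intro h
  have h1 : (1 : ℕ) ∈ {m | ∃ D : Set (Fin n), (∀ x : Fin n, x ∈ D ∨ ∃ y ∈ D, T.Adj x y) ∧
      D.ncard = m} := by
    refine ⟨{v}, fun x => ?_, by simp⟩
    rcases h x with h | h
    · exact Or.inl (by simp [h])
    · exact Or.inr ⟨v, by simp, h⟩
  have := Nat.sInf_le h1
  rw [domNum] at hd
  omega

lemma ecc_ge_two (hT : T.IsTree) (hd : domNum T = 2) (v : Fin n) : 2 ≤ ecc T v := by
  have : NeZero n := ⟨(npos hd).ne'⟩
  by_contra h
  push_neg at h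
  refine no_single_dom hd v (fun x => ?_)
  have hdist : T.dist v x ≤ 1 := le_trans (dist_le_ecc x) (by omega)
  interval_cases hh : T.dist v x
  · exact Or.inl (hT.isConnected.dist_eq_zero_iff.mp hh).symm
  · exact Or.inr (SimpleGraph.dist_eq_one_iff_adj.mp hh).symm

lemma n_ge_two (hT : T.IsTree) (hd : domNum T = 2) : 2 ≤ n := by
  have hp := npos hd
  by_contra h
  push_neg at h
  interval_cases n
  · have : NeZero 1 := ⟨one_ne_zero⟩
    have := ecc_ge_two hT hd 0
    have h2 : ecc T 0 ≤ 0 := ecc_le' (fun u => by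
      have : u = 0 := Subsingleton.elim u 0
      simp [this])
    omega

lemma exists_adj (hT : T.IsTree) (hd : domNum T = 2) (v : Fin n) : ∃ w, T.Adj v w := by
  have h2 := n_ge_two hT hd
  have : NeZero n := ⟨by omega⟩
  obtain ⟨w, hw⟩ := Fintype.exists_ne_of_one_lt_card (by simp; omega) v
  obtain ⟨p⟩ := hT.isConnected v w
  cases p with
  | nil => exact absurd rfl hw.symm
  | cons h q => exact ⟨_, h⟩
end Basics

section Paths
variable {T : SimpleGraph V}


lemma path_unique (hT : T.IsTree) {x y : V} {p q : T.Walk x y}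
    (hp : p.IsPath) (hq : q.IsPath) : p = q :=
  ((hT.existsUnique_path x y).unique hp hq)

-- no triangle-ish: adj u v, w common neighbor → False
lemma no_common_nbr_of_adj (hT : T.IsTree) {u v w : V} (huv : T.Adj u v)
    (h1 : T.Adj u w) (h2 : T.Adj w v) : False := by
  have hp : (SimpleGraph.Walk.cons huv SimpleGraph.Walk.nil : T.Walk u v).IsPath := by
    simp [SimpleGraph.Walk.isPath_def, huv.ne]
  have hq : (SimpleGraph.Walk.cons h1 (SimpleGraph.Walk.cons h2 SimpleGraph.Walk.nil) :
      T.Walk u v).IsPath := by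
    simp [SimpleGraph.Walk.isPath_def, h1.ne, h2.ne, huv.ne]
  have := path_unique hT hp hq
  have := congrArg SimpleGraph.Walk.length this
  simp at this

-- unique common neighbor: w1 w2 both adjacent to u and v, u ≠ v → w1 = w2
lemma common_nbr_unique (hT : T.IsTree) {u v w1 w2 : V} (huv : u ≠ v)
    (h1 : T.Adj u w1) (h2 : T.Adj w1 v) (h3 : T.Adj u w2) (h4 : T.Adj w2 v) : w1 = w2 := by
  by_contra hne
  have hp : (SimpleGraph.Walk.cons h1 (SimpleGraph.Walk.cons h2 SimpleGraph.Walk.nil) :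
      T.Walk u v).IsPath := by
    simp [SimpleGraph.Walk.isPath_def, h1.ne, h2.ne, huv]
  have hq : (SimpleGraph.Walk.cons h3 (SimpleGraph.Walk.cons h4 SimpleGraph.Walk.nil) :
      T.Walk u v).IsPath := by
    simp [SimpleGraph.Walk.isPath_def, h3.ne, h4.ne, huv]
  have := path_unique hT hp hq
  have := congrArg SimpleGraph.Walk.support this
  simp at this
  exact hne this

-- adj u v and disjoint 2-path u-x-y-v → False
lemma no_c4 (hT : T.IsTree) {u v x y : V} (huv : T.Adj u v)
    (h1 : T.Adj u x) (h2 : T.Adj x y) (h3 : T.Adj y v) (hxv : x ≠ v) (huy : u ≠ y) : False := by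
  have hp : (SimpleGraph.Walk.cons huv SimpleGraph.Walk.nil : T.Walk u v).IsPath := by
    simp [SimpleGraph.Walk.isPath_def, huv.ne]
  have hq : (SimpleGraph.Walk.cons h1 (SimpleGraph.Walk.cons h2
      (SimpleGraph.Walk.cons h3 SimpleGraph.Walk.nil)) : T.Walk u v).IsPath := by
    simp [SimpleGraph.Walk.isPath_def, h1.ne, h2.ne, h3.ne, huv.ne, hxv, huy]
  have := path_unique hT hp hq
  have := congrArg SimpleGraph.Walk.length this
  simp at this

-- 2-path u-m-v vs 3-path u-x-y-v → False
lemma no_c5 (hT : T.IsTree) {u v m x y : V}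
    (hm1 : T.Adj u m) (hm2 : T.Adj m v)
    (h1 : T.Adj u x) (h2 : T.Adj x y) (h3 : T.Adj y v)
    (huv : u ≠ v) (hxv : x ≠ v) (huy : u ≠ y) : False := by
  have hp : (SimpleGraph.Walk.cons hm1 (SimpleGraph.Walk.cons hm2 SimpleGraph.Walk.nil) :
      T.Walk u v).IsPath := by
    simp [SimpleGraph.Walk.isPath_def, hm1.ne, hm2.ne, huv]
  have hq : (SimpleGraph.Walk.cons h1 (SimpleGraph.Walk.cons h2
      (SimpleGraph.Walk.cons h3 SimpleGraph.Walk.nil)) : T.Walk u v).IsPath := by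
    simp [SimpleGraph.Walk.isPath_def, h1.ne, h2.ne, h3.ne, huv, hxv, huy]
  have := path_unique hT hp hq
  have := congrArg SimpleGraph.Walk.length this
  simp at this

-- 2-path u-m-v vs 4-path u-p-x-q-v → False
lemma no_c6 (hT : T.IsTree) {u v m p x q : V}
    (hm1 : T.Adj u m) (hm2 : T.Adj m v)
    (h1 : T.Adj u p) (h2 : T.Adj p x) (h3 : T.Adj x q) (h4 : T.Adj q v)
    (huv : u ≠ v) (hux : u ≠ x) (huq : u ≠ q) (hpq : p ≠ q) (hpv : p ≠ v) (hxv : x ≠ v) :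
    False := by
  have hp : (SimpleGraph.Walk.cons hm1 (SimpleGraph.Walk.cons hm2 SimpleGraph.Walk.nil) :
      T.Walk u v).IsPath := by
    simp [SimpleGraph.Walk.isPath_def, hm1.ne, hm2.ne, huv]
  have hq : (SimpleGraph.Walk.cons h1 (SimpleGraph.Walk.cons h2 (SimpleGraph.Walk.cons h3
      (SimpleGraph.Walk.cons h4 SimpleGraph.Walk.nil))) : T.Walk u v).IsPath := by
    simp [SimpleGraph.Walk.isPath_def, h1.ne, h2.ne, h3.ne, h4.ne, huv, hux, huq, hpq, hpv, hxv]
  have := path_unique hT hp hq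
  have := congrArg SimpleGraph.Walk.length this
  simp at this

lemma exists_mid {G : SimpleGraph V} (hc : G.Connected) {u v : V} (h : G.dist u v = 2) :
    ∃ m, G.Adj u m ∧ G.Adj m v := by
  obtain ⟨p, hp⟩ := (hc u v).exists_walk_length_eq_dist
  rw [h] at hp
  match p, hp with
  | SimpleGraph.Walk.cons h1 (SimpleGraph.Walk.cons h2 SimpleGraph.Walk.nil), _ =>
    exact ⟨_, h1, h2⟩

lemma adj_dist_le {G : SimpleGraph V} {u v : V} (h : G.Adj u v) : G.dist u v ≤ 1 :=
  (SimpleGraph.dist_eq_one_iff_adj.mpr h).le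

lemma center_lemma (hT : T.IsTree) {u v m : V} (huv : u ≠ v)
    (h1 : T.Adj u m) (h2 : T.Adj m v)
    (hu : ∀ x, T.dist u x ≤ 2) (hv : ∀ x, T.dist v x ≤ 2) :
    ∀ x, T.dist m x ≤ 1 := by
  intro x
  have hc := hT.isConnected
  have hadjuv : ¬ T.Adj u v := fun h => no_common_nbr_of_adj hT h h1 h2
  have du := hu x
  have dv := hv x
  have hcase : x = m ∨ T.Adj m x := by
    interval_cases hdu : T.dist u x
    · rw [hc.dist_eq_zero_iff] at hdu
      exact Or.inr (hdu ▸ h1.symm)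
    · -- adj u x
      have hux : T.Adj u x := SimpleGraph.dist_eq_one_iff_adj.mp hdu
      interval_cases hdv : T.dist v x
      · rw [hc.dist_eq_zero_iff] at hdv
        exact Or.inr (hdv ▸ h2)
      · exact Or.inl (common_nbr_unique hT huv h1 h2 hux
          (SimpleGraph.dist_eq_one_iff_adj.mp hdv).symm).symm
      · -- dist v x = 2, so dist x v = 2
        obtain ⟨y, hxy, hyv⟩ := exists_mid hc (SimpleGraph.dist_comm.trans hdv :
          T.dist x v = 2)
        by_cases hym : y = m
        · exact Or.inr (hym ▸ hxy).symm
        by_cases huy : u = y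
        · exact absurd (no_common_nbr_of_adj hT (huy ▸ hyv) h1 h2) not_false
        have hxv : x ≠ v := fun h => by rw [h, SimpleGraph.dist_self] at hdv; omega
        exact absurd (no_c5 hT h1 h2 hux hxy hyv huv hxv huy) not_false
    · -- dist u x = 2
      obtain ⟨p, hup, hpx⟩ := exists_mid hc hdu
      have hux : u ≠ x := fun h => by rw [h, SimpleGraph.dist_self] at hdu; omega
      interval_cases hdv : T.dist v x
      · rw [hc.dist_eq_zero_iff] at hdv
        exact Or.inr (hdv ▸ h2)
      · -- adj v x, dist u x = 2: symmetric case
        have hvx : T.Adj v x := SimpleGraph.dist_eq_one_iff_adj.mp hdv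
        by_cases hpm : p = m
        · exact Or.inr (hpm ▸ hpx)
        by_cases hpv : p = v
        · exact absurd (no_common_nbr_of_adj hT (hpv ▸ hup) h1 h2) not_false
        exact absurd (no_c5 hT h2.symm h1.symm hvx hpx.symm hup.symm huv.symm
          (fun h => hux h.symm) (fun h => hpv h.symm)) not_false
      · -- dist v x = 2
        obtain ⟨q, hvq, hqx⟩ := exists_mid hc hdv
        have hxv : x ≠ v := fun h => by rw [h, SimpleGraph.dist_self] at hdv; omega
        by_cases hpm : p = m
        · exact Or.inr (hpm ▸ hpx)
        by_cases hqm : q = m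
        · exact Or.inr (hqm ▸ hqx)
        by_cases hpq : p = q
        · refine absurd ((common_nbr_unique hT huv h1 h2 hup ?_).symm) hpm
          rw [hpq]; exact hvq.symm
        by_cases huq : u = q
        · refine absurd (no_common_nbr_of_adj hT ?_ h1 h2) not_false
          have : T.Adj v u := by rw [huq]; exact hvq
          exact this.symm
        by_cases hpv : p = v
        · exact absurd (no_common_nbr_of_adj hT (hpv ▸ hup) h1 h2) not_false
        exact absurd (no_c6 hT h1 h2 hup hpx hqx.symm hvq.symm huv hux huq hpq hpv hxv)
          not_false
  rcases hcase with h | h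
  · rw [← h, SimpleGraph.dist_self]; omega
  · exact adj_dist_le h

end Paths


-- weighted handshake
lemma sum_edge [Fintype V] (G : SimpleGraph V) [DecidableEq V] [DecidableRel G.Adj] (f : V → ℝ) :
    ∑ e ∈ G.edgeFinset, Sym2.lift ⟨fun u v => f u + f v, fun _ _ => by ring⟩ e
      = ∑ v, (G.degree v : ℝ) * f v := by
  have key : ∑ d : G.Dart, f d.fst = ∑ v, (G.degree v : ℝ) * f v := by
    rw [← Finset.sum_fiberwise_of_maps_to (g := fun d : G.Dart => d.fst)
      (fun d _ => Finset.mem_univ d.fst) (fun d => f d.fst)]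
    refine Finset.sum_congr rfl fun v _ => ?_
    have : ∀ d ∈ Finset.univ.filter (fun d : G.Dart => d.fst = v), f d.fst = f v := by
      intro d hd
      simp only [Finset.mem_filter] at hd
      rw [hd.2]
    rw [Finset.sum_congr rfl this, Finset.sum_const, ← G.dart_fst_fiber_card_eq_degree v,
      nsmul_eq_mul]
  rw [← key]
  rw [← Finset.sum_fiberwise_of_maps_to (t := G.edgeFinset) (g := fun d : G.Dart => d.edge)
      (fun d _ => by rw [mem_edgeFinset]; exact d.edge_mem) (fun d => f d.fst)]
  refine Finset.sum_congr rfl fun e he => ?_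
  rw [mem_edgeFinset] at he
  induction e with
  | _ x y =>
    set d : G.Dart := ⟨(x, y), he⟩ with hdd
    have hd : d.edge = s(x, y) := rfl
    have hfib := SimpleGraph.Dart.edge_fiber d
    rw [hd] at hfib
    rw [hfib, Finset.sum_insert (by
      rw [Finset.mem_singleton]
      exact fun h => d.symm_ne h.symm), Finset.sum_singleton]
    simp [d, SimpleGraph.Dart.symm]

def IsDS {n : ℕ} (T : SimpleGraph (Fin n)) (u v : Fin n) : Prop :=
  T.Adj u v ∧ (∃ x, T.Adj u x ∧ x ≠ v) ∧ (∃ y, T.Adj v y ∧ y ≠ u) ∧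
  ∀ x, x ≠ u → x ≠ v →
    ((T.Adj u x ∧ ∀ z, T.Adj x z → z = u) ∨ (T.Adj v x ∧ ∀ z, T.Adj x z → z = v))

section DS
variable {n : ℕ} {T : SimpleGraph (Fin n)} {u v : Fin n}

lemma IsDS.symm (h : IsDS T u v) : IsDS T v u :=
  ⟨h.1.symm, h.2.2.1, h.2.1, fun x hxv hxu => (h.2.2.2 x hxu hxv).symm⟩

lemma ds_branch (h : IsDS T u v) {x : Fin n} (hxu : x ≠ u) (hxv : x ≠ v)
    (hadj : T.Adj u x) : ∀ z, T.Adj x z → z = u := by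
  rcases h.2.2.2 x hxu hxv with ⟨_, hz⟩ | ⟨_, hz⟩
  · exact hz
  · exact absurd (hz u hadj.symm) h.1.ne

-- the B-witness has all its neighbors equal to v
lemma ds_bwitness (h : IsDS T u v) {y : Fin n} (hvy : T.Adj v y) (hyu : y ≠ u) :
    ∀ z, T.Adj y z → z = v :=
  ds_branch h.symm (fun hyv => hvy.ne hyv.symm) hyu hvy

lemma ds_dist_u_le (hT : T.IsTree) (h : IsDS T u v) (x : Fin n) : T.dist u x ≤ 2 := by
  by_cases hxu : x = u
  · subst hxu; simp [SimpleGraph.dist_self]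
  by_cases hxv : x = v
  · subst hxv; exact le_trans (adj_dist_le h.1) (by omega)
  rcases h.2.2.2 x hxu hxv with ⟨hux, _⟩ | ⟨hvx, _⟩
  · exact le_trans (adj_dist_le hux) (by omega)
  · calc T.dist u x ≤ T.dist u v + T.dist v x := hT.isConnected.dist_triangle
    _ ≤ 1 + 1 := add_le_add (adj_dist_le h.1) (adj_dist_le hvx)
    _ = 2 := rfl

lemma ds_ecc_u (hT : T.IsTree) (h : IsDS T u v) : ecc T u = 2 := by
  have : Nonempty (Fin n) := ⟨u⟩
  have : Fintype (Fin n) := inferInstance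
  refine le_antisymm (ecc_le' (ds_dist_u_le hT h)) ?_
  obtain ⟨y, hvy, hyu⟩ := h.2.2.1
  have hy := ds_bwitness h hvy hyu
  have h0 : T.dist u y ≠ 0 := by
    simp only [ne_eq, hT.isConnected.dist_eq_zero_iff]
    exact fun he => hyu he.symm
  have h1 : T.dist u y ≠ 1 := by
    simp only [ne_eq, SimpleGraph.dist_eq_one_iff_adj]
    exact fun hadj => h.1.ne (hy u hadj.symm)
  have := dist_le_ecc (G := T) (v := u) y
  have := ds_dist_u_le hT h y
  omega

lemma ds_ecc_A (hT : T.IsTree) (h : IsDS T u v) {x : Fin n} (hxu : x ≠ u) (hxv : x ≠ v)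
    (hux : T.Adj u x) : ecc T x = 3 := by
  have : Nonempty (Fin n) := ⟨u⟩
  have hbr := ds_branch h hxu hxv hux
  refine le_antisymm (ecc_le' (fun w => ?_)) ?_
  · calc T.dist x w ≤ T.dist x u + T.dist u w := hT.isConnected.dist_triangle
    _ ≤ 1 + 2 := add_le_add (adj_dist_le hux.symm) (ds_dist_u_le hT h w)
    _ = 3 := rfl
  · obtain ⟨y, hvy, hyu⟩ := h.2.2.1
    have hy := ds_bwitness h hvy hyu
    have h0 : T.dist x y ≠ 0 := by
      simp only [ne_eq, hT.isConnected.dist_eq_zero_iff]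
      rintro rfl
      exact h.1.ne (hy u hux.symm)
    have h1 : T.dist x y ≠ 1 := by
      simp only [ne_eq, SimpleGraph.dist_eq_one_iff_adj]
      exact fun hadj => hyu (hbr y hadj)
    have h2 : T.dist x y ≠ 2 := by
      intro h2
      obtain ⟨m, hxm, hmy⟩ := exists_mid hT.isConnected h2
      have hmu : m = u := hbr m hxm
      subst hmu
      exact h.1.ne (hy m hmy.symm)
    have hle : T.dist x y ≤ 3 := by
      calc T.dist x y ≤ T.dist x u + T.dist u y := hT.isConnected.dist_triangle
      _ ≤ 1 + 2 := add_le_add (adj_dist_le hux.symm) (ds_dist_u_le hT h y)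
      _ = 3 := rfl
    have := dist_le_ecc (G := T) (v := x) y
    omega

lemma ds_nbr_A [DecidableRel T.Adj] (h : IsDS T u v) {x : Fin n} (hxu : x ≠ u) (hxv : x ≠ v)
    (hux : T.Adj u x) : T.neighborFinset x = {u} := by
  ext z
  simp only [SimpleGraph.mem_neighborFinset, Finset.mem_singleton]
  exact ⟨fun hz => ds_branch h hxu hxv hux z hz, fun hz => hz ▸ hux.symm⟩

lemma ds_nbr_union [DecidableRel T.Adj] (hT : T.IsTree) (h : IsDS T u v) :
    T.neighborFinset u ∪ T.neighborFinset v = Finset.univ := by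
  ext x
  simp only [Finset.mem_union, SimpleGraph.mem_neighborFinset, Finset.mem_univ, iff_true]
  by_cases hxu : x = u
  · exact Or.inr (hxu ▸ h.1.symm)
  by_cases hxv : x = v
  · exact Or.inl (hxv ▸ h.1)
  rcases h.2.2.2 x hxu hxv with ⟨h1, _⟩ | ⟨h1, _⟩
  · exact Or.inl h1
  · exact Or.inr h1

lemma ds_nbr_disj [DecidableRel T.Adj] (hT : T.IsTree) (h : IsDS T u v) :
    Disjoint (T.neighborFinset u) (T.neighborFinset v) := by
  rw [Finset.disjoint_left]
  intro z hzu hzv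
  simp only [SimpleGraph.mem_neighborFinset] at hzu hzv
  exact no_common_nbr_of_adj hT h.1 hzu hzv.symm

lemma ds_deg_sum [DecidableRel T.Adj] (hT : T.IsTree) (h : IsDS T u v) :
    T.degree u + T.degree v = n := by
  have hcard := Finset.card_union_of_disjoint (ds_nbr_disj hT h)
  rw [ds_nbr_union hT h, Finset.card_univ, Fintype.card_fin] at hcard
  unfold SimpleGraph.degree
  omega

end DS
section Ree
variable {n : ℕ} {T : SimpleGraph (Fin n)} {u v : Fin n}

lemma deg_eq_degree [DecidableRel T.Adj] (v : Fin n) : deg T v = T.degree v := by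
  rw [deg, Set.ncard_eq_toFinset_card']
  congr 1

lemma ree_eq_sum (T : SimpleGraph (Fin n)) :
    ree T = ∑ v, (deg T v : ℝ) * (1 / (ecc T v : ℝ)) := by
  classical
  unfold ree
  rw [sum_edge T (fun w => 1 / (ecc T w : ℝ))]
  refine Finset.sum_congr rfl fun v _ => ?_
  rw [deg_eq_degree]

lemma ds_ree (hT : T.IsTree) (h : IsDS T u v) : ree T = (5 * (n : ℝ) - 4) / 6 := by
  classical
  have hn2 : 2 ≤ n := by
    have : Nontrivial (Fin n) := ⟨u, v, h.1.ne⟩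
    have := Fintype.one_lt_card (α := Fin n)
    simp at this; omega
  have hcard : (Finset.univ \ {u, v} : Finset (Fin n)).card = n - 2 := by
    rw [Finset.card_sdiff, Finset.inter_univ, Finset.card_univ, Fintype.card_fin,
      Finset.card_pair h.1.ne]
  have huni : (Finset.univ : Finset (Fin n)) = insert u (insert v (Finset.univ \ {u, v})) := by
    ext x
    simp only [Finset.mem_univ, Finset.mem_insert, Finset.mem_sdiff, Finset.mem_singleton,
      true_iff, true_and]
    by_cases hx : x = u
    · exact Or.inl hx
    by_cases hx' : x = v
    · exact Or.inr (Or.inl hx')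
    · exact Or.inr (Or.inr (by simp [hx, hx']))
  have hu_notmem : u ∉ insert v (Finset.univ \ {u, v}) := by
    simp [h.1.ne]
  have hv_notmem : v ∉ (Finset.univ \ {u, v}) := by simp
  rw [ree_eq_sum, huni, Finset.sum_insert hu_notmem, Finset.sum_insert hv_notmem]
  have hrest : ∀ x ∈ Finset.univ \ {u, v}, (deg T x : ℝ) * (1 / (ecc T x : ℝ)) = 1 / 3 := by
    intro x hx
    simp only [Finset.mem_sdiff, Finset.mem_insert, Finset.mem_singleton] at hx
    push_neg at hx
    obtain ⟨-, hxu, hxv⟩ := hx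
    have hdeg : deg T x = 1 := by
      rcases h.2.2.2 x hxu hxv with ⟨h1, _⟩ | ⟨h1, _⟩
      · rw [deg_eq_degree, SimpleGraph.degree, ds_nbr_A h hxu hxv h1, Finset.card_singleton]
      · rw [deg_eq_degree, SimpleGraph.degree,
          ds_nbr_A h.symm hxv hxu h1, Finset.card_singleton]
    have hecc : ecc T x = 3 := by
      rcases h.2.2.2 x hxu hxv with ⟨h1, _⟩ | ⟨h1, _⟩
      · exact ds_ecc_A hT h hxu hxv h1
      · exact ds_ecc_A hT h.symm hxv hxu h1
    rw [hdeg, hecc]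
    norm_num
  rw [Finset.sum_congr rfl hrest, Finset.sum_const, hcard]
  rw [ds_ecc_u hT h, ds_ecc_u hT h.symm]
  have hdegsum : (deg T u : ℝ) + deg T v = n := by
    rw [deg_eq_degree, deg_eq_degree]
    rw [← Nat.cast_add, ds_deg_sum hT h]
  have hc : ((n - 2 : ℕ) : ℝ) = (n : ℝ) - 2 := by
    rw [Nat.cast_sub hn2]; norm_num
  rw [nsmul_eq_mul, hc]
  push_cast
  nlinarith [hdegsum]

end Ree
section Ineq
variable {n : ℕ} {T : SimpleGraph (Fin n)}

lemma center_adj (hT : T.IsTree) (hd : domNum T = 2) {u v : Fin n}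
    (hu : ecc T u = 2) (hv : ecc T v = 2) (huv : u ≠ v) : T.Adj u v := by
  have hle := dist_le_ecc (G := T) (v := u) v
  rw [hu] at hle
  have h0 : T.dist u v ≠ 0 := by
    simp only [ne_eq, hT.isConnected.dist_eq_zero_iff]
    exact huv
  rcases (by omega : T.dist u v = 1 ∨ T.dist u v = 2) with h | h
  · exact SimpleGraph.dist_eq_one_iff_adj.mp h
  · exfalso
    obtain ⟨m, h1, h2⟩ := exists_mid hT.isConnected h
    have : Nonempty (Fin n) := ⟨u⟩
    have hm := center_lemma hT huv h1 h2
      (fun x => (dist_le_ecc x).trans hu.le) (fun x => (dist_le_ecc x).trans hv.le)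
    have := ecc_ge_two hT hd m
    have := ecc_le' hm
    omega

lemma union_univ_isDS (hT : T.IsTree) (hd : domNum T = 2) [DecidableRel T.Adj]
    {u v : Fin n} (huv : T.Adj u v)
    (hun : T.neighborFinset u ∪ T.neighborFinset v = Finset.univ) : IsDS T u v := by
  have : Nonempty (Fin n) := ⟨u⟩
  have hmem : ∀ x : Fin n, T.Adj u x ∨ T.Adj v x := by
    intro x
    have : x ∈ T.neighborFinset u ∪ T.neighborFinset v := hun ▸ Finset.mem_univ x
    simpa [Finset.mem_union] using this
  -- branch property
  have hbr : ∀ x, x ≠ u → x ≠ v →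
      ((T.Adj u x ∧ ∀ z, T.Adj x z → z = u) ∨ (T.Adj v x ∧ ∀ z, T.Adj x z → z = v)) := by
    intro x hxu hxv
    rcases hmem x with hx | hx
    · refine Or.inl ⟨hx, fun z hz => ?_⟩
      by_contra hzu
      by_cases hzv : z = v
      · exact no_common_nbr_of_adj hT huv hx (hzv ▸ hz)
      rcases hmem z with h2 | h2
      · exact no_common_nbr_of_adj hT hx h2 hz.symm
      · exact no_c4 hT huv hx hz h2.symm hxv (fun h => hzu h.symm)
    · refine Or.inr ⟨hx, fun z hz => ?_⟩
      by_contra hzv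
      by_cases hzu : z = u
      · exact no_common_nbr_of_adj hT huv.symm hx (hzu ▸ hz)
      rcases hmem z with h2 | h2
      · exact no_c4 hT huv.symm hx hz h2.symm hxu (fun h => hzv h.symm)
      · exact no_common_nbr_of_adj hT hx h2 hz.symm
  -- existence of a private neighbor of u
  have hwit : ∀ (p q : Fin n), T.Adj p q →
      (∀ x : Fin n, T.Adj p x ∨ T.Adj q x) → (∃ x, T.Adj p x ∧ x ≠ q) := by
    intro p q hpq hm
    by_contra hno
    push_neg at hno
    have : ∀ x, T.dist q x ≤ 1 := by
      intro x
      rcases hm x with h | h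
      · rw [hno x h]
        simp [SimpleGraph.dist_self]
      · exact adj_dist_le h
    have := ecc_le' this
    have := ecc_ge_two hT hd q
    omega
  exact ⟨huv, hwit u v huv hmem, hwit v u huv.symm (fun x => (hmem x).symm), hbr⟩

lemma main_bound (hT : T.IsTree) (hd : domNum T = 2) :
    ree T ≤ (5 * (n : ℝ) - 4) / 6 ∧
      (ree T = (5 * (n : ℝ) - 4) / 6 → ∃ u v, IsDS T u v) := by
  classical
  have hn1 : 1 ≤ n := npos hd
  have : Nonempty (Fin n) := ⟨⟨0, hn1⟩⟩
  set C : Finset (Fin n) := Finset.univ.filter (fun v => ecc T v = 2) with hC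
  set S : ℕ := ∑ v ∈ C, T.degree v with hS
  -- pointwise bound
  have hpoint : ∀ v : Fin n, (deg T v : ℝ) * (1 / (ecc T v : ℝ)) ≤
      (T.degree v : ℝ) * ((1:ℝ)/3 + if ecc T v = 2 then 1/6 else 0) := by
    intro v
    rw [deg_eq_degree]
    by_cases h2 : ecc T v = 2
    · rw [h2, if_pos rfl]
      norm_num
    · rw [if_neg h2]
      have h3 : 3 ≤ ecc T v := by
        have := ecc_ge_two hT hd v
        omega
      have : (1 : ℝ) / (ecc T v : ℝ) ≤ 1/3 + 0 := by
        rw [add_zero]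
        apply one_div_le_one_div_of_le
        · norm_num
        · exact_mod_cast h3
      nlinarith [Nat.cast_nonneg (α := ℝ) (T.degree v), this]
  have hsum1 : ree T ≤ ∑ v, (T.degree v : ℝ) * ((1:ℝ)/3 + if ecc T v = 2 then 1/6 else 0) := by
    rw [ree_eq_sum]
    exact Finset.sum_le_sum (fun v _ => hpoint v)
  have hsplit : ∑ v, (T.degree v : ℝ) * ((1:ℝ)/3 + if ecc T v = 2 then 1/6 else 0)
      = (2 * ((n : ℝ) - 1)) / 3 + (S : ℝ) / 6 := by
    have hdegsum : ∑ v, (T.degree v : ℝ) = 2 * ((n:ℝ) - 1) := by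
      have h1 := T.sum_degrees_eq_twice_card_edges
      have h2 := hT.card_edgeFinset
      rw [Fintype.card_fin] at h2
      have : (∑ v, (T.degree v : ℝ)) = ((∑ v, T.degree v : ℕ) : ℝ) := by push_cast; ring
      rw [this, h1]
      have hcE : (T.edgeFinset.card : ℝ) = (n : ℝ) - 1 := by
        have h3 : ((T.edgeFinset.card : ℝ)) + 1 = (n : ℝ) := by exact_mod_cast h2
        linarith
      push_cast
      rw [hcE]
      try ring
    have hre : ∑ v, (T.degree v : ℝ) * ((1:ℝ)/3 + if ecc T v = 2 then 1/6 else 0)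
        = ∑ v, ((T.degree v : ℝ)/3 + (if ecc T v = 2 then (T.degree v : ℝ)/6 else 0)) := by
      refine Finset.sum_congr rfl fun v _ => ?_
      by_cases h : ecc T v = 2 <;> simp [h] <;> ring
    rw [hre, Finset.sum_add_distrib, ← Finset.sum_div, hdegsum, ← Finset.sum_filter]
    try congr 1
    try simp [hS, hC, Nat.cast_sum, Finset.sum_div]
  -- S ≤ n, and S = n gives structure
  have hCadj : ∀ x ∈ C, ∀ y ∈ C, x ≠ y → T.Adj x y := by
    intro x hx y hy hxy
    rw [hC, Finset.mem_filter] at hx hy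
    exact center_adj hT hd hx.2 hy.2 hxy
  have hcard2 : C.card ≤ 2 := by
    by_contra hc
    push_neg at hc
    obtain ⟨a, b, c, ha, hb, hcc, hab, hac, hbc⟩ := Finset.two_lt_card_iff.mp hc
    exact no_common_nbr_of_adj hT (hCadj a ha b hb hab) (hCadj a ha c hcc hac)
      (hCadj c hcc b hb hbc.symm)
  have hmain : S ≤ n ∧ (S = n → ∃ u v, IsDS T u v) := by
    rcases (by omega : C.card = 0 ∨ C.card = 1 ∨ C.card = 2) with h | h | h
    · rw [Finset.card_eq_zero] at h
      rw [hS, h]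
      simp only [Finset.sum_empty]
      constructor
      · omega
      · intro h0
        exfalso
        omega
    · obtain ⟨c, hc⟩ := Finset.card_eq_one.mp h
      rw [hS, hc, Finset.sum_singleton]
      have := T.degree_lt_card_verts c
      rw [Fintype.card_fin] at this
      exact ⟨by omega, fun h => absurd h (by omega)⟩
    · obtain ⟨u, v, huv, hCuv⟩ := Finset.card_eq_two.mp h
      have hu : ecc T u = 2 := by
        have : u ∈ C := hCuv ▸ Finset.mem_insert_self u {v}
        rw [hC, Finset.mem_filter] at this
        exact this.2
      have hv : ecc T v = 2 := by
        have : v ∈ C := hCuv ▸ (Finset.mem_insert_of_mem (Finset.mem_singleton_self v))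
        rw [hC, Finset.mem_filter] at this
        exact this.2
      have hadj : T.Adj u v := center_adj hT hd hu hv huv
      have hdisj : Disjoint (T.neighborFinset u) (T.neighborFinset v) := by
        rw [Finset.disjoint_left]
        intro z hzu hzv
        simp only [SimpleGraph.mem_neighborFinset] at hzu hzv
        exact no_common_nbr_of_adj hT hadj hzu hzv.symm
      have hSeq : S = (T.neighborFinset u ∪ T.neighborFinset v).card := by
        rw [hS, hCuv, Finset.sum_pair huv, Finset.card_union_of_disjoint hdisj]
        rfl
      have hle : S ≤ n := by
        rw [hSeq]
        have := Finset.card_le_univ (T.neighborFinset u ∪ T.neighborFinset v)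
        rwa [Fintype.card_fin] at this
      refine ⟨hle, fun hSn => ⟨u, v, ?_⟩⟩
      have huniv : T.neighborFinset u ∪ T.neighborFinset v = Finset.univ := by
        apply Finset.eq_univ_of_card
        rw [← hSeq, hSn, Fintype.card_fin]
      exact union_univ_isDS hT hd hadj huniv
  have hfinal : ree T ≤ (2 * ((n : ℝ) - 1)) / 3 + (S : ℝ) / 6 := hsplit ▸ hsum1
  have hSn : (S : ℝ) ≤ (n : ℝ) := by exact_mod_cast hmain.1
  constructor
  · linarith
  · intro heq
    apply hmain.2
    have : (n : ℝ) ≤ (S : ℝ) := by linarith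
    have := hmain.1
    have : n ≤ S := by exact_mod_cast ‹(n:ℝ) ≤ S›
    omega

end Ineq
noncomputable def buildF {n : ℕ} (u v : Fin n) (A B : Finset (Fin n)) (x : Fin n) :
    Fin (A.card + B.card + 2) :=
  if x = u then ⟨0, by omega⟩
  else if x = v then ⟨1, by omega⟩
  else if hx : x ∈ A then
    ⟨2 + (A.equivFin ⟨x, hx⟩).val, by have := (A.equivFin ⟨x, hx⟩).isLt; omega⟩
  else if hx : x ∈ B then
    ⟨A.card + 2 + (B.equivFin ⟨x, hx⟩).val, by have := (B.equivFin ⟨x, hx⟩).isLt; omega⟩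
  else ⟨0, by omega⟩

lemma doubleStar_adj (a b : ℕ) (p q : Fin (a + b + 2)) :
    (doubleStar a b).Adj p q ↔ ((p.val = 0 ∧ q.val = 1) ∨ (q.val = 0 ∧ p.val = 1) ∨
      (p.val = 0 ∧ 2 ≤ q.val ∧ q.val < a + 2) ∨ (q.val = 0 ∧ 2 ≤ p.val ∧ p.val < a + 2) ∨
      (p.val = 1 ∧ a + 2 ≤ q.val) ∨ (q.val = 1 ∧ a + 2 ≤ p.val)) := by
  rw [doubleStar, SimpleGraph.fromRel_adj]
  constructor
  · rintro ⟨hne, h | h⟩ <;> tauto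
  · intro h
    have hne : p ≠ q := by
      intro he
      rw [Fin.ext_iff] at he
      rcases h with h | h | h | h | h | h <;> omega
    exact ⟨hne, by tauto⟩
section Iso
variable {n : ℕ} {T : SimpleGraph (Fin n)} {u v : Fin n}

lemma ds_iso (hT : T.IsTree) (h : IsDS T u v) :
    ∃ a b : ℕ, 1 ≤ a ∧ 1 ≤ b ∧ a + b = n - 2 ∧ Nonempty (T ≃g doubleStar a b) := by
  classical
  have huv : T.Adj u v := h.1
  set A : Finset (Fin n) := Finset.univ.filter (fun x => T.Adj u x ∧ x ≠ v) with hA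
  set B : Finset (Fin n) := Finset.univ.filter (fun x => T.Adj v x ∧ x ≠ u) with hB
  have hmemA : ∀ x, x ∈ A ↔ T.Adj u x ∧ x ≠ v := by intro x; simp [hA]
  have hmemB : ∀ x, x ∈ B ↔ T.Adj v x ∧ x ≠ u := by intro x; simp [hB]
  have huA : u ∉ A := fun hx => ((hmemA u).1 hx).1.ne rfl
  have huB : u ∉ B := fun hx => ((hmemB u).1 hx).2 rfl
  have hvA : v ∉ A := fun hx => ((hmemA v).1 hx).2 rfl
  have hvB : v ∉ B := fun hx => ((hmemB v).1 hx).1.ne rfl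
  have hAu : ∀ x ∈ A, x ≠ u := fun x hx => (((hmemA x).1 hx).1).ne'
  have hAv : ∀ x ∈ A, x ≠ v := fun x hx => ((hmemA x).1 hx).2
  have hBv : ∀ x ∈ B, x ≠ v := fun x hx => (((hmemB x).1 hx).1).ne'
  have hBu : ∀ x ∈ B, x ≠ u := fun x hx => ((hmemB x).1 hx).2
  have hdisjAB : ∀ x, x ∈ A → x ∈ B → False := fun x hx hy =>
    no_common_nbr_of_adj hT huv ((hmemA x).1 hx).1 (((hmemB x).1 hy).1.symm)
  have hcover : ∀ x, x = u ∨ x = v ∨ x ∈ A ∨ x ∈ B := by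
    intro x
    by_cases h1 : x = u
    · exact Or.inl h1
    by_cases h2 : x = v
    · exact Or.inr (Or.inl h2)
    rcases h.2.2.2 x h1 h2 with ⟨hadj, _⟩ | ⟨hadj, _⟩
    · exact Or.inr (Or.inr (Or.inl ((hmemA x).2 ⟨hadj, h2⟩)))
    · exact Or.inr (Or.inr (Or.inr ((hmemB x).2 ⟨hadj, h1⟩)))
  have hdisj : Disjoint A B := by
    rw [Finset.disjoint_left]
    exact fun x hx hy => hdisjAB x hx hy
  have hcardn : n = A.card + B.card + 2 := by
    have huniv : (Finset.univ : Finset (Fin n)) = insert u (insert v (A ∪ B)) := by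
      ext x
      simp only [Finset.mem_univ, Finset.mem_insert, Finset.mem_union, true_iff]
      rcases hcover x with h1 | h1 | h1 | h1 <;> tauto
    have h1 : u ∉ insert v (A ∪ B) := by
      simp only [Finset.mem_insert, Finset.mem_union]
      push_neg
      exact ⟨huv.ne, huA, huB⟩
    have h2 : v ∉ A ∪ B := by
      simp only [Finset.mem_union]
      push_neg
      exact ⟨hvA, hvB⟩
    have : (Finset.univ : Finset (Fin n)).card = A.card + B.card + 2 := by
      rw [huniv, Finset.card_insert_of_notMem h1, Finset.card_insert_of_notMem h2,
        Finset.card_union_of_disjoint hdisj]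
      try omega
    rw [Finset.card_univ, Fintype.card_fin] at this
    exact this
  have hnbrA : ∀ x ∈ A, ∀ z, T.Adj x z → z = u := fun x hx =>
    ds_branch h (hAu x hx) (hAv x hx) ((hmemA x).1 hx).1
  have hnbrB : ∀ x ∈ B, ∀ z, T.Adj x z → z = v := fun x hx =>
    ds_branch h.symm (hBv x hx) (hBu x hx) ((hmemB x).1 hx).1
  -- adjacency table
  have htab : ∀ x y, T.Adj x y ↔ ((x = u ∧ y = v) ∨ (x = v ∧ y = u) ∨
      (x = u ∧ y ∈ A) ∨ (y = u ∧ x ∈ A) ∨ (x = v ∧ y ∈ B) ∨ (y = v ∧ x ∈ B)) := by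
    intro x y
    constructor
    · intro hxy
      rcases hcover x with rfl | rfl | hx | hx
      · rcases hcover y with rfl | rfl | hy | hy
        · exact absurd rfl hxy.ne
        · tauto
        · tauto
        · exact absurd (hnbrB y hy _ hxy.symm) huv.ne
      · rcases hcover y with rfl | rfl | hy | hy
        · tauto
        · exact absurd rfl hxy.ne
        · exact absurd (hnbrA y hy x hxy.symm).symm huv.ne
        · tauto
      · exact Or.inr (Or.inr (Or.inr (Or.inl ⟨hnbrA x hx y hxy, hx⟩)))
      · exact Or.inr (Or.inr (Or.inr (Or.inr (Or.inr ⟨hnbrB x hx y hxy, hx⟩))))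
    · rintro (⟨rfl, rfl⟩ | ⟨rfl, rfl⟩ | ⟨rfl, hy⟩ | ⟨rfl, hx⟩ | ⟨rfl, hy⟩ | ⟨rfl, hx⟩)
      · exact huv
      · exact huv.symm
      · exact ((hmemA y).1 hy).1
      · exact ((hmemA x).1 hx).1.symm
      · exact ((hmemB y).1 hy).1
      · exact ((hmemB x).1 hx).1.symm
  -- the map
  set F : Fin n → Fin (A.card + B.card + 2) := buildF u v A B with hF
  have hFu : (F u).val = 0 := by simp [hF, buildF]
  have hFv : (F v).val = 1 := by simp [hF, buildF, huv.ne']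
  have hFAval : ∀ x (hx : x ∈ A), (F x).val = 2 + (A.equivFin ⟨x, hx⟩).val := by
    intro x hx
    simp only [hF, buildF, if_neg (hAu x hx), if_neg (hAv x hx), dif_pos hx]
  have hFBval : ∀ x (hx : x ∈ B), (F x).val = A.card + 2 + (B.equivFin ⟨x, hx⟩).val := by
    intro x hx
    have hxA : x ∉ A := fun hxa => hdisjAB x hxa hx
    simp only [hF, buildF, if_neg (hBu x hx), if_neg (hBv x hx), dif_neg hxA, dif_pos hx]
  have hFA : ∀ x, x ∈ A → 2 ≤ (F x).val ∧ (F x).val < A.card + 2 := by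
    intro x hx
    rw [hFAval x hx]
    have := (A.equivFin ⟨x, hx⟩).isLt
    omega
  have hFB : ∀ x, x ∈ B → A.card + 2 ≤ (F x).val := by
    intro x hx
    rw [hFBval x hx]
    omega
  have hinj : Function.Injective F := by
    intro x y hxy
    have hval : (F x).val = (F y).val := congrArg Fin.val hxy
    rcases hcover x with rfl | rfl | hx | hx <;> rcases hcover y with rfl | rfl | hy | hy
    · rfl
    · rw [hFu, hFv] at hval; omega
    · have := hFA y hy; rw [hFu] at hval; omega
    · have := hFB y hy; rw [hFu] at hval; omega
    · rw [hFu, hFv] at hval; omega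
    · rfl
    · have := hFA y hy; rw [hFv] at hval; omega
    · have := hFB y hy; rw [hFv] at hval; omega
    · have := hFA x hx; rw [hFu] at hval; omega
    · have := hFA x hx; rw [hFv] at hval; omega
    · rw [hFAval x hx, hFAval y hy] at hval
      have : A.equivFin ⟨x, hx⟩ = A.equivFin ⟨y, hy⟩ := Fin.ext (by omega)
      have := A.equivFin.injective this
      exact congrArg Subtype.val this
    · have := hFA x hx; have := hFB y hy; omega
    · have := hFB x hx; rw [hFu] at hval; omega
    · have := hFB x hx; rw [hFv] at hval; omega
    · have := hFB x hx; have := hFA y hy; omega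
    · rw [hFBval x hx, hFBval y hy] at hval
      have : B.equivFin ⟨x, hx⟩ = B.equivFin ⟨y, hy⟩ := Fin.ext (by omega)
      have := B.equivFin.injective this
      exact congrArg Subtype.val this
  have hbij : Function.Bijective F :=
    (Fintype.bijective_iff_injective_and_card F).2 ⟨hinj, by simp [Fintype.card_fin, hcardn.symm]⟩
  have hval0 : ∀ x, (F x).val = 0 → x = u := by
    intro x hx
    exact hinj (Fin.ext (by rw [hx, hFu]))
  have hval1 : ∀ x, (F x).val = 1 → x = v := by
    intro x hx
    exact hinj (Fin.ext (by rw [hx, hFv]))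
  have hvalA : ∀ x, 2 ≤ (F x).val → (F x).val < A.card + 2 → x ∈ A := by
    intro x h1 h2
    rcases hcover x with rfl | rfl | hx | hx
    · rw [hFu] at h1; omega
    · rw [hFv] at h1; omega
    · exact hx
    · have := hFB x hx; omega
  have hvalB : ∀ x, A.card + 2 ≤ (F x).val → x ∈ B := by
    intro x h1
    rcases hcover x with rfl | rfl | hx | hx
    · rw [hFu] at h1; omega
    · rw [hFv] at h1; omega
    · have := hFA x hx; omega
    · exact hx
  have hmap : ∀ x y : Fin n, (doubleStar A.card B.card).Adj (F x) (F y) ↔ T.Adj x y := by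
    intro x y
    rw [doubleStar_adj, htab x y]
    constructor
    · rintro (⟨h1, h2⟩ | ⟨h1, h2⟩ | ⟨h1, h2, h3⟩ | ⟨h1, h2, h3⟩ | ⟨h1, h2⟩ | ⟨h1, h2⟩)
      · exact Or.inl ⟨hval0 x h1, hval1 y h2⟩
      · exact Or.inr (Or.inl ⟨hval1 x h2, hval0 y h1⟩)
      · exact Or.inr (Or.inr (Or.inl ⟨hval0 x h1, hvalA y h2 h3⟩))
      · exact Or.inr (Or.inr (Or.inr (Or.inl ⟨hval0 y h1, hvalA x h2 h3⟩)))
      · exact Or.inr (Or.inr (Or.inr (Or.inr (Or.inl ⟨hval1 x h1, hvalB y h2⟩))))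
      · exact Or.inr (Or.inr (Or.inr (Or.inr (Or.inr ⟨hval1 y h1, hvalB x h2⟩))))
    · rintro (⟨rfl, rfl⟩ | ⟨rfl, rfl⟩ | ⟨rfl, hy⟩ | ⟨rfl, hx⟩ | ⟨rfl, hy⟩ | ⟨rfl, hx⟩)
      · exact Or.inl ⟨hFu, hFv⟩
      · exact Or.inr (Or.inl ⟨hFu, hFv⟩)
      · exact Or.inr (Or.inr (Or.inl ⟨hFu, (hFA y hy).1, (hFA y hy).2⟩))
      · exact Or.inr (Or.inr (Or.inr (Or.inl ⟨hFu, (hFA x hx).1, (hFA x hx).2⟩)))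
      · exact Or.inr (Or.inr (Or.inr (Or.inr (Or.inl ⟨hFv, hFB y hy⟩))))
      · exact Or.inr (Or.inr (Or.inr (Or.inr (Or.inr ⟨hFv, hFB x hx⟩))))
  obtain ⟨xw, hxw1, hxw2⟩ := h.2.1
  obtain ⟨yw, hyw1, hyw2⟩ := h.2.2.1
  refine ⟨A.card, B.card, ?_, ?_, by omega, ⟨⟨Equiv.ofBijective F hbij, ?_⟩⟩⟩
  · exact Finset.card_pos.2 ⟨xw, (hmemA xw).2 ⟨hxw1, hxw2⟩⟩
  · exact Finset.card_pos.2 ⟨yw, (hmemB yw).2 ⟨hyw1, hyw2⟩⟩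
  · intro x y
    exact hmap x y

end Iso
section IsoRev
variable {n : ℕ} {T : SimpleGraph (Fin n)}

lemma iso_ds (hT : T.IsTree) {a b : ℕ} (ha : 1 ≤ a) (hb : 1 ≤ b)
    (e : T ≃g doubleStar a b) : ∃ u v : Fin n, IsDS T u v := by
  classical
  set p0 : Fin (a + b + 2) := ⟨0, by omega⟩ with hp0
  set p1 : Fin (a + b + 2) := ⟨1, by omega⟩ with hp1
  set u : Fin n := e.symm p0 with hu
  set v : Fin n := e.symm p1 with hv
  have heu : e u = p0 := by rw [hu]; exact e.apply_symm_apply p0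
  have hev : e v = p1 := by rw [hv]; exact e.apply_symm_apply p1
  have hadj : ∀ x y : Fin n, T.Adj x y ↔ (doubleStar a b).Adj (e x) (e y) :=
    fun x y => (e.map_adj_iff).symm
  have hgen : ∀ (z : Fin n) (p : Fin (a + b + 2)), e z = p → z = e.symm p := by
    intro z p hz
    rw [← hz, RelIso.symm_apply_apply]
  have huv : T.Adj u v := by
    rw [hadj, heu, hev, doubleStar_adj]
    exact Or.inl ⟨rfl, rfl⟩
  refine ⟨u, v, huv, ?_, ?_, ?_⟩
  · refine ⟨e.symm ⟨2, by omega⟩, ?_, ?_⟩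
    · rw [hadj, heu, e.apply_symm_apply, doubleStar_adj]
      exact Or.inr (Or.inr (Or.inl ⟨rfl, by simp; omega⟩))
    · intro hcon
      rw [hv] at hcon
      have := e.symm.injective hcon
      simp [Fin.ext_iff, hp1] at this
  · refine ⟨e.symm ⟨a + 2, by omega⟩, ?_, ?_⟩
    · rw [hadj, hev, e.apply_symm_apply, doubleStar_adj]
      exact Or.inr (Or.inr (Or.inr (Or.inr (Or.inl ⟨rfl, by simp⟩))))
    · intro hcon
      rw [hu] at hcon
      have := e.symm.injective hcon
      simp [Fin.ext_iff, hp0] at this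
  · intro x hxu hxv
    have hx0 : (e x).val ≠ 0 := by
      intro hc
      exact hxu (by rw [hu]; exact hgen x p0 (Fin.ext hc))
    have hx1 : (e x).val ≠ 1 := by
      intro hc
      exact hxv (by rw [hv]; exact hgen x p1 (Fin.ext hc))
    have hx2 : 2 ≤ (e x).val := by omega
    by_cases hcase : (e x).val < a + 2
    · refine Or.inl ⟨?_, ?_⟩
      · rw [hadj, heu, doubleStar_adj]
        exact Or.inr (Or.inr (Or.inl ⟨rfl, hx2, hcase⟩))
      · intro z hz
        rw [hadj, doubleStar_adj] at hz
        have hz0 : (e z).val = 0 := by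
          rcases hz with h' | h' | h' | h' | h' | h' <;> omega
        rw [hu]
        exact hgen z p0 (Fin.ext hz0)
    · push_neg at hcase
      refine Or.inr ⟨?_, ?_⟩
      · rw [hadj, hev, doubleStar_adj]
        exact Or.inr (Or.inr (Or.inr (Or.inr (Or.inl ⟨rfl, hcase⟩))))
      · intro z hz
        rw [hadj, doubleStar_adj] at hz
        have hz1 : (e z).val = 1 := by
          rcases hz with h' | h' | h' | h' | h' | h' <;> omega
        rw [hv]
        exact hgen z p1 (Fin.ext hz1)

end IsoRev

/-- for a tree T on n vertices with domination number 2,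
ξ^{ee}(T) ≤ (5n-4)/6 with equality iff T is a double star P_2(a,b). -/
theorem stmt12 (n : ℕ) (T : SimpleGraph (Fin n)) (hT : T.IsTree)
    (hd : domNum T = 2) :
    ree T ≤ (5 * (n : ℝ) - 4) / 6 ∧
    (ree T = (5 * (n : ℝ) - 4) / 6 ↔ ∃ a b : ℕ, 1 ≤ a ∧ 1 ≤ b ∧ a + b = n - 2 ∧
      Nonempty (T ≃g doubleStar a b)) := by
  constructor
  · exact (main_bound hT hd).1
  constructor
  · intro heq
    obtain ⟨u, v, hds⟩ := (main_bound hT hd).2 heq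
    exact ds_iso hT hds
  · rintro ⟨a, b, ha, hb, hab, ⟨e⟩⟩
    obtain ⟨u, v, hds⟩ := iso_ds hT ha hb e
    exact ds_ree hT hds
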